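/- For every integer N ≥ 1, h = 1/N and every z ∈ [0,1], the coefficients C̊_β(z) reproduce the exponential e^{−x} exactly: Σ_{β=0}^N C̊_β(z) · e^{−hβ} = e^{−z}. -/

import Mathlib

/-- The optimal coefficients `C̊_β(z)` of the optimal interpolation formula in
`W₂^{(1,0)}(0,1)` with equally spaced nodes `x_β = βh`, `h = 1/N`. -/
noncomputable def optC1 (N : ℕ) (z : ℝ) (β : ℕ) : ℝ :=
  let h : ℝ := 1 / N;
  1 / (2 * (1 - Real.exp (2 * h))) *
    (Real.sign (z - h * β - h) * (Real.exp (h * β + 2 * h - z) - Real.exp (z - h * β))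
      + Real.sign (z - h * β + h) * (Real.exp (h * β - z) - Real.exp (z - h * β + 2 * h))
      + (1 + Real.exp (2 * h)) * Real.sign (z - h * β) *
          (Real.exp (z - h * β) - Real.exp (h * β - z)))

lemma sign_helper (c u : ℝ) :
    Real.sign u * (Real.exp (c - u) - Real.exp (c + u))
      = Real.exp c * (Real.exp (-|u|) - Real.exp |u|) := by
  rcases lt_trichotomy u 0 with h | h | h
  · rw [Real.sign_of_neg h, abs_of_neg h]
    simp only [Real.exp_sub, Real.exp_add, Real.exp_neg, neg_neg]
    field_simp
    ring
  · simp [h]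
  · rw [Real.sign_of_pos h, abs_of_pos h]
    simp only [Real.exp_sub, Real.exp_add, Real.exp_neg]
    field_simp

lemma sign_helper2 (u : ℝ) :
    Real.sign u * (Real.exp u - Real.exp (-u)) = Real.exp |u| - Real.exp (-|u|) := by
  rcases lt_trichotomy u 0 with h | h | h
  · rw [Real.sign_of_neg h, abs_of_neg h, neg_neg]; ring
  · simp [h]
  · rw [Real.sign_of_pos h, abs_of_pos h]; ring

lemma optC1_abs (N : ℕ) (z : ℝ) (β : ℕ) :
    optC1 N z β =
      1 / (2 * (1 - Real.exp (2 * (1 / (N:ℝ))))) *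
        (Real.exp (1/(N:ℝ)) * (Real.exp (-|z - (1/(N:ℝ)) * β - 1/(N:ℝ)|) - Real.exp |z - (1/(N:ℝ)) * β - 1/(N:ℝ)|)
          + Real.exp (1/(N:ℝ)) * (Real.exp (-|z - (1/(N:ℝ)) * β + 1/(N:ℝ)|) - Real.exp |z - (1/(N:ℝ)) * β + 1/(N:ℝ)|)
          + (1 + Real.exp (2 * (1/(N:ℝ)))) * (Real.exp |z - (1/(N:ℝ)) * β| - Real.exp (-|z - (1/(N:ℝ)) * β|))) := by
  simp only [optC1]
  set h : ℝ := 1 / (N:ℝ) with hh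
  have t1 : Real.sign (z - h*β - h) * (Real.exp (h*β + 2*h - z) - Real.exp (z - h*β))
      = Real.exp h * (Real.exp (-|z - h*β - h|) - Real.exp |z - h*β - h|) := by
    have e := sign_helper h (z - h*β - h)
    rw [show h - (z - h*β - h) = h*β + 2*h - z by ring,
        show h + (z - h*β - h) = z - h*β by ring] at e
    exact e
  have t2 : Real.sign (z - h*β + h) * (Real.exp (h*β - z) - Real.exp (z - h*β + 2*h))
      = Real.exp h * (Real.exp (-|z - h*β + h|) - Real.exp |z - h*β + h|) := by
    have e := sign_helper h (z - h*β + h)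
    rw [show h - (z - h*β + h) = h*β - z by ring,
        show h + (z - h*β + h) = z - h*β + 2*h by ring] at e
    exact e
  have t3 : (1 + Real.exp (2*h)) * Real.sign (z - h*β) * (Real.exp (z - h*β) - Real.exp (h*β - z))
      = (1 + Real.exp (2*h)) * (Real.exp |z - h*β| - Real.exp (-|z - h*β|)) := by
    have e := sign_helper2 (z - h*β)
    rw [show -(z - h*β) = h*β - z by ring] at e
    rw [mul_assoc, e]
  rw [t1, t2, t3]

lemma one_sub_exp_ne (h : ℝ) (hp : 0 < h) : 1 - Real.exp (2 * h) ≠ 0 := by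
  have := Real.add_one_lt_exp (show 2*h ≠ 0 by positivity)
  intro hc; nlinarith

lemma optC1_of_ge (N : ℕ) (hN : 1 ≤ N) (z : ℝ) (β : ℕ)
    (hb : (1/(N:ℝ)) * β + 1/(N:ℝ) ≤ z) : optC1 N z β = 0 := by
  have hNp : (0:ℝ) < N := by exact_mod_cast Nat.pos_of_ne_zero (by omega)
  have hp : (0:ℝ) < 1/(N:ℝ) := by positivity
  rw [optC1_abs]
  set h : ℝ := 1 / (N:ℝ) with hh
  rw [abs_of_nonneg (show (0:ℝ) ≤ z - h*β - h by linarith),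
      abs_of_nonneg (show (0:ℝ) ≤ z - h*β + h by linarith),
      abs_of_nonneg (show (0:ℝ) ≤ z - h*β by linarith)]
  simp only [Real.exp_neg, Real.exp_sub, Real.exp_add, show (2:ℝ)*h = h + h by ring]
  have e1 := Real.exp_pos h
  have e2 := Real.exp_pos (z - h*β)
  field_simp
  ring_nf

lemma optC1_of_le (N : ℕ) (hN : 1 ≤ N) (z : ℝ) (β : ℕ)
    (hb : z + 1/(N:ℝ) ≤ (1/(N:ℝ)) * β) : optC1 N z β = 0 := by
  have hNp : (0:ℝ) < N := by exact_mod_cast Nat.pos_of_ne_zero (by omega)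
  have hp : (0:ℝ) < 1/(N:ℝ) := by positivity
  rw [optC1_abs]
  set h : ℝ := 1 / (N:ℝ) with hh
  rw [abs_of_nonpos (show z - h*β - h ≤ 0 by linarith),
      abs_of_nonpos (show z - h*β + h ≤ 0 by linarith),
      abs_of_nonpos (show z - h*β ≤ 0 by linarith)]
  simp only [Real.exp_neg, Real.exp_sub, Real.exp_add, neg_neg, neg_sub, neg_add_rev]
  simp only [show (2:ℝ)*h = h + h by ring, Real.exp_add, Real.exp_sub, Real.exp_neg]
  have e1 := Real.exp_pos h
  have e2 := Real.exp_pos (z - h*β)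
  have e3 := Real.exp_pos (h*β - z)
  field_simp
  ring_nf

lemma optC1_mid_r (N : ℕ) (hN : 1 ≤ N) (z : ℝ) (β : ℕ)
    (hb0 : (1/(N:ℝ)) * β ≤ z) (hb1 : z ≤ (1/(N:ℝ)) * β + 1/(N:ℝ)) :
    optC1 N z β = (Real.exp (z - (1/(N:ℝ))*β) - Real.exp (2*(1/(N:ℝ))) * Real.exp ((1/(N:ℝ))*β - z))
        / (1 - Real.exp (2*(1/(N:ℝ)))) := by
  have hNp : (0:ℝ) < N := by exact_mod_cast Nat.pos_of_ne_zero (by omega)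
  have hp : (0:ℝ) < 1/(N:ℝ) := by positivity
  rw [optC1_abs]
  set h : ℝ := 1 / (N:ℝ) with hh
  have hne := one_sub_exp_ne h hp
  rw [abs_of_nonpos (show z - h*β - h ≤ 0 by linarith),
      abs_of_nonneg (show (0:ℝ) ≤ z - h*β + h by linarith),
      abs_of_nonneg (show (0:ℝ) ≤ z - h*β by linarith),
      eq_div_iff hne]
  have hne' : (1:ℝ) - Real.exp h * Real.exp h ≠ 0 := by
    rw [← Real.exp_add]; rw [show h + h = 2*h by ring]; exact hne
  simp only [Real.exp_neg, Real.exp_sub, Real.exp_add, neg_neg, neg_sub, neg_add_rev]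
  simp only [show (2:ℝ)*h = h + h by ring, Real.exp_add, Real.exp_sub, Real.exp_neg]
  have hne'' : (1:ℝ) - Real.exp h ^ 2 ≠ 0 := by rw [sq]; exact hne'
  field_simp
  ring

lemma optC1_mid_l (N : ℕ) (hN : 1 ≤ N) (z : ℝ) (β : ℕ)
    (hb0 : (1/(N:ℝ)) * β - 1/(N:ℝ) ≤ z) (hb1 : z ≤ (1/(N:ℝ)) * β) :
    optC1 N z β = (Real.exp ((1/(N:ℝ))*β - z) - Real.exp (2*(1/(N:ℝ))) * Real.exp (z - (1/(N:ℝ))*β))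
        / (1 - Real.exp (2*(1/(N:ℝ)))) := by
  have hNp : (0:ℝ) < N := by exact_mod_cast Nat.pos_of_ne_zero (by omega)
  have hp : (0:ℝ) < 1/(N:ℝ) := by positivity
  rw [optC1_abs]
  set h : ℝ := 1 / (N:ℝ) with hh
  have hne := one_sub_exp_ne h hp
  rw [abs_of_nonpos (show z - h*β - h ≤ 0 by linarith),
      abs_of_nonneg (show (0:ℝ) ≤ z - h*β + h by linarith),
      abs_of_nonpos (show z - h*β ≤ 0 by linarith),
      eq_div_iff hne]
  have hne' : (1:ℝ) - Real.exp h * Real.exp h ≠ 0 := by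
    rw [← Real.exp_add]; rw [show h + h = 2*h by ring]; exact hne
  simp only [Real.exp_neg, Real.exp_sub, Real.exp_add, neg_neg, neg_sub, neg_add_rev]
  simp only [show (2:ℝ)*h = h + h by ring, Real.exp_add, Real.exp_sub, Real.exp_neg]
  have hne'' : (1:ℝ) - Real.exp h ^ 2 ≠ 0 := by rw [sq]; exact hne'
  field_simp
  ring

lemma key_sum (z b h : ℝ) (hp : 0 < h) :
    (Real.exp (z - b) - Real.exp (2*h) * Real.exp (b - z)) / (1 - Real.exp (2*h)) * Real.exp (-b)
      + (Real.exp (b + h - z) - Real.exp (2*h) * Real.exp (z - (b + h))) / (1 - Real.exp (2*h))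
          * Real.exp (-(b + h))
      = Real.exp (-z) := by
  have hne := one_sub_exp_ne h hp
  have hne' : (1:ℝ) - Real.exp h * Real.exp h ≠ 0 := by
    rw [← Real.exp_add, show h + h = 2*h by ring]; exact hne
  simp only [show (2:ℝ)*h = h + h by ring, Real.exp_add, Real.exp_sub, Real.exp_neg]
  have hne'' : (1:ℝ) - Real.exp h ^ 2 ≠ 0 := by rw [sq]; exact hne'
  field_simp
  ring

/-- For every `N ≥ 1`, `h = 1/N` and every `z ∈ [0,1]`, the optimal coefficients reproduce
the exponential `e^{−x}` exactly: `Σ_{β=0}^N C̊_β(z)·e^{−hβ} = e^{−z}`. -/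
theorem optC1_reproduces_exp_neg (N : ℕ) (hN : 1 ≤ N) (z : ℝ)
    (hz : z ∈ Set.Icc (0 : ℝ) 1) :
    ∑ β ∈ Finset.range (N + 1), optC1 N z β * Real.exp (-((1 / N : ℝ) * β))
      = Real.exp (-z) := by
  obtain ⟨hz0, hz1⟩ := hz
  have hNp : (0:ℝ) < N := by exact_mod_cast Nat.pos_of_ne_zero (by omega)
  set h : ℝ := 1 / (N:ℝ) with hh
  have hp : 0 < h := by positivity
  have hhN : h * N = 1 := by rw [hh]; field_simp
  have hne := one_sub_exp_ne h hp
  set k : ℕ := ⌊z * N⌋₊ with hkdef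
  have hk_le : (k:ℝ) ≤ z * N := Nat.floor_le (by positivity)
  have hk_lt : z * N < k + 1 := Nat.lt_floor_add_one _
  have hkN : k ≤ N := by
    have : (k:ℝ) ≤ (N:ℝ) := le_trans hk_le (by nlinarith)
    exact_mod_cast this
  have hzh : h * (z * N) = z := by rw [hh]; field_simp
  have hb0 : h * k ≤ z := by nlinarith [mul_le_mul_of_nonneg_left hk_le hp.le]
  have hb1 : z ≤ h * k + h := by nlinarith [mul_le_mul_of_nonneg_left hk_lt.le hp.le]
  rcases lt_or_eq_of_le hkN with hlt | heq
  · -- k < N : two contributing terms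
    have hsub : ({k, k+1} : Finset ℕ) ⊆ Finset.range (N+1) := by
      intro x hx; simp only [Finset.mem_insert, Finset.mem_singleton] at hx
      simp only [Finset.mem_range]; omega
    have hzero : ∀ β ∈ Finset.range (N+1), β ∉ ({k, k+1} : Finset ℕ) →
        optC1 N z β * Real.exp (-(h * β)) = 0 := by
      intro β hβ hβ'
      simp only [Finset.mem_insert, Finset.mem_singleton, not_or] at hβ'
      rcases lt_or_gt_of_ne hβ'.1 with hc | hc
      · have hcast : (β:ℝ) + 1 ≤ (k:ℝ) := by exact_mod_cast hc
        rw [optC1_of_ge N hN z β (by nlinarith), zero_mul]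
      · have hβ2 : k + 2 ≤ β := by omega
        have hcast : (k:ℝ) + 2 ≤ (β:ℝ) := by exact_mod_cast hβ2
        rw [optC1_of_le N hN z β (by nlinarith), zero_mul]
    rw [← Finset.sum_subset hsub hzero, Finset.sum_pair (by omega : k ≠ k + 1)]
    rw [optC1_mid_r N hN z k hb0 hb1,
        optC1_mid_l N hN z (k+1) (by push_cast; linarith) (by push_cast; linarith)]
    push_cast
    rw [show h * ((k:ℝ) + 1) = h * (k:ℝ) + h by ring]
    exact key_sum z (h * (k:ℝ)) h hp
  · -- k = N : z = 1, single term
    have hz1' : z = 1 := by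
      have : h * (N:ℝ) ≤ z := by rw [← heq] at hhN ⊢; exact hb0
      rw [hhN] at this; linarith
    rw [Finset.sum_range_succ]
    have hrest : ∑ β ∈ Finset.range N, optC1 N z β * Real.exp (-(h * β)) = 0 := by
      apply Finset.sum_eq_zero
      intro β hβ
      have hβN : β + 1 ≤ N := Finset.mem_range.mp hβ
      have hcast : (β:ℝ) + 1 ≤ (N:ℝ) := by exact_mod_cast hβN
      rw [optC1_of_ge N hN z β (by nlinarith), zero_mul]
    rw [hrest, zero_add,
        optC1_mid_r N hN z N (by rw [hhN]; linarith) (by rw [hhN]; linarith)]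
    rw [hhN, hz1', sub_self, Real.exp_zero, mul_one]
    rw [div_mul_eq_mul_div, div_eq_iff hne]
    ring
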